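/- Let an equilateral triangle have vertices v_k = c + R·exp(I·(2πk/3 + θ)), k = 0,1,2, with R > 0, and let M be a point with L = |M − c| ≤ R (M inside or on the circumcircle) and d_k = |M − v_k|. Then 6R² = d₀² + d₁² + d₂² + 4√3·Δ and 6L² = d₀² + d₁² + d₂² − 4√3·Δ, where Δ is the area of the Pompeiu triangle with sides d₀, d₁, d₂. -/

import Mathlib

open Complex Real Finset

theorem equilateral_R_L_from_distances (c M : ℂ) (R θ : ℝ) (hR : 0 < R)
    (L : ℝ) (hL : L = ‖M - c‖) (hLR : L ≤ R)
    (d : Fin 3 → ℝ)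
    (hd : ∀ k : Fin 3,
      d k = ‖M - (c + R * Complex.exp (Complex.I * ((2 * π * (k : ℕ) / 3 + θ : ℝ) : ℂ)))‖)
    (Δ : ℝ)
    (hΔ : Δ = (1 / 4) * Real.sqrt
      ((d 0 + d 1 + d 2) * (-d 0 + d 1 + d 2) * (d 0 - d 1 + d 2) * (d 0 + d 1 - d 2))) :
    6 * R ^ 2 = d 0 ^ 2 + d 1 ^ 2 + d 2 ^ 2 + 4 * Real.sqrt 3 * Δ
      ∧ 6 * L ^ 2 = d 0 ^ 2 + d 1 ^ 2 + d 2 ^ 2 - 4 * Real.sqrt 3 * Δ := by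
  have hS3 : Real.sqrt 3 ^ 2 = 3 := Real.sq_sqrt (by norm_num)
  have hS3nn : (0:ℝ) ≤ Real.sqrt 3 := Real.sqrt_nonneg 3
  have hpyth : Real.cos θ ^ 2 + Real.sin θ ^ 2 = 1 := by
    rw [add_comm]; exact Real.sin_sq_add_cos_sq θ
  have hLnn : 0 ≤ L := hL ▸ norm_nonneg _
  have hLsq : L ^ 2 = (M.re - c.re) ^ 2 + (M.im - c.im) ^ 2 := by
    rw [hL, Complex.sq_norm, Complex.normSq_apply]
    simp only [Complex.sub_re, Complex.sub_im]
    ring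
  have key : ∀ t : ℝ, (‖M - (c + R * Complex.exp (Complex.I * (t:ℂ)))‖)^2
      = (M.re - c.re - R * Real.cos t) ^ 2 + (M.im - c.im - R * Real.sin t) ^ 2 := by
    intro t
    rw [mul_comm Complex.I, Complex.sq_norm, Complex.normSq_apply]
    simp only [Complex.sub_re, Complex.sub_im, Complex.add_re, Complex.add_im,
      Complex.mul_re, Complex.mul_im, Complex.exp_ofReal_mul_I_re,
      Complex.exp_ofReal_mul_I_im, Complex.ofReal_re, Complex.ofReal_im]
    ring
  have hab : (((M.re - c.re) * Real.cos θ + (M.im - c.im) * Real.sin θ)) ^ 2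
      + (((M.im - c.im) * Real.cos θ - (M.re - c.re) * Real.sin θ)) ^ 2 = L ^ 2 := by
    rw [hLsq]
    linear_combination ((M.re - c.re)^2 + (M.im - c.im)^2) * hpyth
  have h0 : d 0 ^ 2 = L ^ 2 + R ^ 2
      - 2 * R * ((M.re - c.re) * Real.cos θ + (M.im - c.im) * Real.sin θ) := by
    rw [hd 0, key]
    rw [show (2 * π * (((0 : Fin 3) : ℕ) : ℝ) / 3 + θ) = θ by norm_num]
    rw [hLsq]; linear_combination R ^ 2 * hpyth
  have h1 : d 1 ^ 2 = L ^ 2 + R ^ 2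
      + R * ((M.re - c.re) * Real.cos θ + (M.im - c.im) * Real.sin θ)
      - R * Real.sqrt 3 * ((M.im - c.im) * Real.cos θ - (M.re - c.re) * Real.sin θ) := by
    rw [hd 1, key]
    rw [show (2 * π * (((1 : Fin 3) : ℕ) : ℝ) / 3 + θ) = (π - π/3) + θ by norm_num; ring]
    rw [Real.cos_add, Real.sin_add, Real.cos_pi_sub, Real.sin_pi_sub,
      Real.cos_pi_div_three, Real.sin_pi_div_three, hLsq]
    linear_combination (R ^ 2 * Real.cos θ ^ 2 / 4 + R ^ 2 * Real.sin θ ^ 2 / 4) * hS3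
      + R ^ 2 * hpyth
  have h2 : d 2 ^ 2 = L ^ 2 + R ^ 2
      + R * ((M.re - c.re) * Real.cos θ + (M.im - c.im) * Real.sin θ)
      + R * Real.sqrt 3 * ((M.im - c.im) * Real.cos θ - (M.re - c.re) * Real.sin θ) := by
    rw [hd 2, key]
    rw [show (2 * π * (((2 : Fin 3) : ℕ) : ℝ) / 3 + θ) = (π + π/3) + θ by norm_num; ring]
    rw [Real.cos_add (π + π/3), Real.sin_add (π + π/3), Real.cos_add π, Real.sin_add π,
      Real.cos_pi, Real.sin_pi, Real.cos_pi_div_three, Real.sin_pi_div_three, hLsq]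
    linear_combination (R ^ 2 * Real.cos θ ^ 2 / 4 + R ^ 2 * Real.sin θ ^ 2 / 4) * hS3
      + R ^ 2 * hpyth
  -- abbreviate for the algebra
  set a := (M.re - c.re) * Real.cos θ + (M.im - c.im) * Real.sin θ with hadef
  set b := (M.im - c.im) * Real.cos θ - (M.re - c.re) * Real.sin θ with hbdef
  set S3 := Real.sqrt 3 with hS3d
  have hP : (d 0 + d 1 + d 2) * (-d 0 + d 1 + d 2) * (d 0 - d 1 + d 2) * (d 0 + d 1 - d 2)
      = 3 * (R ^ 2 - L ^ 2) ^ 2 := by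
    linear_combination
      (-(d 0 ^ 2 + (L ^ 2 + R ^ 2 - 2 * R * a)) + (d 1 ^ 2 + (L ^ 2 + R ^ 2 + R * a - R * S3 * b))
        + (d 2 ^ 2 + (L ^ 2 + R ^ 2 + R * a + R * S3 * b))) * h0
      + ((d 0 ^ 2 + (L ^ 2 + R ^ 2 - 2 * R * a)) - (d 1 ^ 2 + (L ^ 2 + R ^ 2 + R * a - R * S3 * b))
        + (d 2 ^ 2 + (L ^ 2 + R ^ 2 + R * a + R * S3 * b))) * h1
      + ((d 0 ^ 2 + (L ^ 2 + R ^ 2 - 2 * R * a)) + (d 1 ^ 2 + (L ^ 2 + R ^ 2 + R * a - R * S3 * b))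
        - (d 2 ^ 2 + (L ^ 2 + R ^ 2 + R * a + R * S3 * b))) * h2
      + (-4 * R ^ 2 * b ^ 2) * hS3
      + (-12 * R ^ 2) * hab
  have hRL : 0 ≤ R ^ 2 - L ^ 2 := by nlinarith
  have hΔval : Δ = S3 / 4 * (R ^ 2 - L ^ 2) := by
    rw [hΔ, hP, show 3 * (R ^ 2 - L ^ 2) ^ 2 = (S3 * (R ^ 2 - L ^ 2)) ^ 2 by
      linear_combination -(R ^ 2 - L ^ 2) ^ 2 * hS3,
      Real.sqrt_sq (mul_nonneg hS3nn hRL)]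
    ring
  have hsum : d 0 ^ 2 + d 1 ^ 2 + d 2 ^ 2 = 3 * L ^ 2 + 3 * R ^ 2 := by
    linear_combination h0 + h1 + h2
  have h43 : 4 * S3 * Δ = 3 * (R ^ 2 - L ^ 2) := by
    rw [hΔval]
    linear_combination (R ^ 2 - L ^ 2) * hS3
  constructor
  · linear_combination -hsum - h43
  · linear_combination -hsum + h43
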